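/- Let q : ℝⁿ → ℝ and p : ℝⁿ → ℝ be C² functions with all derivatives up to order 2 having at most polynomial growth. Suppose p(x) = p(xₙ) depends only on the last coordinate and L_λ p = 0 on {xₙ > 0}, where L_λ u = Δu − (x/2)·∇u + (λ/2)u, and L_λ q = 0 on {xₙ > 0}. Then ∫_{{xₙ = 0}} (q ∂ₙp − p ∂ₙq) Gₙ dx' = 0, where Gₙ(x) = (4π)^{-n/2} e^{-|x|²/4}. -/

import Mathlib

open MeasureTheory Real Set
open scoped RealInnerProductSpace

/-- The Laplacian on `ℝⁿ` as the sum of second coordinate derivatives. -/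
noncomputable def lap {n : ℕ} (f : EuclideanSpace ℝ (Fin n) → ℝ)
    (x : EuclideanSpace ℝ (Fin n)) : ℝ :=
  ∑ i : Fin n,
    fderiv ℝ (fun y => fderiv ℝ f y (EuclideanSpace.single i 1)) x (EuclideanSpace.single i 1)

/-- The embedding of the hyperplane `{xₙ = 0}`: `x' ↦ (x', 0)`. -/
noncomputable def emb (n : ℕ) (x' : EuclideanSpace ℝ (Fin n)) :
    EuclideanSpace ℝ (Fin (n + 1)) :=
  (WithLp.equiv 2 (Fin (n + 1) → ℝ)).symm
    (Fin.snoc ((WithLp.equiv 2 (Fin n → ℝ)) x') 0)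

/-- The derivative in the last coordinate direction. -/
noncomputable def dn {n : ℕ} (f : EuclideanSpace ℝ (Fin (n + 1)) → ℝ)
    (x : EuclideanSpace ℝ (Fin (n + 1))) : ℝ :=
  fderiv ℝ f x (EuclideanSpace.single (Fin.last n) 1)

noncomputable def GG (n : ℕ) (x : EuclideanSpace ℝ (Fin (n + 1))) : ℝ :=
  (4 * π) ^ (-((n : ℝ) + 1) / 2) * Real.exp (-‖x‖ ^ 2 / 4)

noncomputable def AA (n : ℕ) (q p : EuclideanSpace ℝ (Fin (n + 1)) → ℝ) (i : Fin (n + 1))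
    (x : EuclideanSpace ℝ (Fin (n + 1))) : ℝ :=
  GG n x * (p x * fderiv ℝ q x (EuclideanSpace.single i 1)
    - q x * fderiv ℝ p x (EuclideanSpace.single i 1))

lemma gg_pos (n : ℕ) (x : EuclideanSpace ℝ (Fin (n + 1))) : 0 < GG n x :=
  mul_pos (Real.rpow_pos_of_pos (by positivity) _) (Real.exp_pos _)

lemma hasFDerivAt_gg (n : ℕ) (x : EuclideanSpace ℝ (Fin (n + 1))) :
    HasFDerivAt (GG n) ((-(GG n x) / 2) • innerSL ℝ x) x := by
  have h1 : HasFDerivAt (fun x : EuclideanSpace ℝ (Fin (n + 1)) => ‖x‖ ^ 2)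
      (2 • innerSL ℝ x) x := by
    simpa using (hasFDerivAt_id x).norm_sq
  have h2 := (h1.const_mul (-1/4 : ℝ))
  have h3 := (Real.hasDerivAt_exp ((-1/4) * ‖x‖^2)).comp_hasFDerivAt x h2
  have h4 := h3.const_mul ((4 * π) ^ (-((n : ℝ) + 1) / 2))
  have he : (GG n) = fun x : EuclideanSpace ℝ (Fin (n + 1)) =>
      (4 * π) ^ (-((n : ℝ) + 1) / 2) * Real.exp ((-1/4) * ‖x‖ ^ 2) := by
    funext y; simp only [GG]; ring_nf
  rw [he]
  refine h4.congr_fderiv ?_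
  ext v
  simp only [GG, ContinuousLinearMap.coe_smul', Pi.smul_apply, innerSL_apply_apply, smul_eq_mul,
    ContinuousLinearMap.smul_apply, ContinuousLinearMap.comp_apply,
    ContinuousLinearMap.coe_id', id_eq]
  ring_nf

lemma diff_D {n : ℕ} {f : EuclideanSpace ℝ (Fin (n + 1)) → ℝ} (hf : ContDiff ℝ 2 f)
    (v : EuclideanSpace ℝ (Fin (n + 1))) :
    ContDiff ℝ 1 (fun x => fderiv ℝ f x v) :=
  (hf.fderiv_right (by norm_num)).clm_apply contDiff_const

lemma euclid_decomp {m : ℕ} (x : EuclideanSpace ℝ (Fin m)) :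
    x = ∑ i, x i • EuclideanSpace.single i (1 : ℝ) := by
  simpa [EuclideanSpace.basisFun_apply, EuclideanSpace.basisFun_repr] using
    ((EuclideanSpace.basisFun (Fin m) ℝ).sum_repr x).symm

lemma inner_gradient {m : ℕ} (f : EuclideanSpace ℝ (Fin m) → ℝ) (x v : EuclideanSpace ℝ (Fin m)) :
    ⟪gradient f x, v⟫ = fderiv ℝ f x v := by
  rw [← InnerProductSpace.toDual_apply_apply]
  simp [gradient]

lemma sum_coord_fderiv {m : ℕ} (f : EuclideanSpace ℝ (Fin m) → ℝ) (x : EuclideanSpace ℝ (Fin m)) :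
    ∑ i, x i * fderiv ℝ f x (EuclideanSpace.single i 1) = ⟪x, gradient f x⟫ := by
  rw [real_inner_comm, inner_gradient]
  have h := congrArg (fderiv ℝ f x) (euclid_decomp x)
  rw [h, map_sum]
  simp

lemma fderiv_AA_apply {n : ℕ} {q p : EuclideanSpace ℝ (Fin (n + 1)) → ℝ}
    (hq : ContDiff ℝ 2 q) (hp : ContDiff ℝ 2 p) (i : Fin (n + 1))
    (x v : EuclideanSpace ℝ (Fin (n + 1))) :
    fderiv ℝ (AA n q p i) x v =
      (-(GG n x) / 2) * ⟪x, v⟫ *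
          (p x * fderiv ℝ q x (EuclideanSpace.single i 1)
            - q x * fderiv ℝ p x (EuclideanSpace.single i 1))
        + GG n x *
          (fderiv ℝ p x v * fderiv ℝ q x (EuclideanSpace.single i 1)
            + p x * fderiv ℝ (fun y => fderiv ℝ q y (EuclideanSpace.single i 1)) x v
            - fderiv ℝ q x v * fderiv ℝ p x (EuclideanSpace.single i 1)
            - q x * fderiv ℝ (fun y => fderiv ℝ p y (EuclideanSpace.single i 1)) x v) := by
  have hq1 : HasFDerivAt q (fderiv ℝ q x) x :=
    (hq.differentiable (by norm_num) x).hasFDerivAt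
  have hp1 : HasFDerivAt p (fderiv ℝ p x) x :=
    (hp.differentiable (by norm_num) x).hasFDerivAt
  have hdq : HasFDerivAt (fun y => fderiv ℝ q y (EuclideanSpace.single i 1))
      (fderiv ℝ (fun y => fderiv ℝ q y (EuclideanSpace.single i 1)) x) x :=
    (((diff_D hq _).differentiable one_ne_zero) x).hasFDerivAt
  have hdp : HasFDerivAt (fun y => fderiv ℝ p y (EuclideanSpace.single i 1))
      (fderiv ℝ (fun y => fderiv ℝ p y (EuclideanSpace.single i 1)) x) x :=
    (((diff_D hp _).differentiable one_ne_zero) x).hasFDerivAt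
  have hAA : AA n q p i = fun x => GG n x * (p x * fderiv ℝ q x (EuclideanSpace.single i 1)
      - q x * fderiv ℝ p x (EuclideanSpace.single i 1)) := rfl
  have H : HasFDerivAt (fun x => GG n x * (p x * fderiv ℝ q x (EuclideanSpace.single i 1)
      - q x * fderiv ℝ p x (EuclideanSpace.single i 1))) _ x :=
    (hasFDerivAt_gg n x).mul ((hp1.mul hdq).sub (hq1.mul hdp))
  rw [hAA, H.fderiv]
  simp only [ContinuousLinearMap.add_apply, ContinuousLinearMap.smul_apply,
    ContinuousLinearMap.sub_apply, innerSL_apply_apply, smul_eq_mul]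
  ring

lemma sum_fderiv_AA {n : ℕ} {q p : EuclideanSpace ℝ (Fin (n + 1)) → ℝ}
    (hq : ContDiff ℝ 2 q) (hp : ContDiff ℝ 2 p) (x : EuclideanSpace ℝ (Fin (n + 1))) :
    ∑ i, fderiv ℝ (AA n q p i) x (EuclideanSpace.single i 1) =
      GG n x * (p x * (lap q x - (1 / 2) * ⟪x, gradient q x⟫)
        - q x * (lap p x - (1 / 2) * ⟪x, gradient p x⟫)) := by
  have key : ∑ i, fderiv ℝ (AA n q p i) x (EuclideanSpace.single i 1)
      = ∑ i, ((((-(GG n x) / 2) * p x) * (x i * fderiv ℝ q x (EuclideanSpace.single i 1))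
          - ((-(GG n x) / 2) * q x) * (x i * fderiv ℝ p x (EuclideanSpace.single i 1)))
          + ((GG n x * p x) *
              fderiv ℝ (fun y => fderiv ℝ q y (EuclideanSpace.single i 1)) x
                (EuclideanSpace.single i 1)
            - (GG n x * q x) *
              fderiv ℝ (fun y => fderiv ℝ p y (EuclideanSpace.single i 1)) x
                (EuclideanSpace.single i 1))) := by
    refine Finset.sum_congr rfl fun i _ => ?_
    rw [fderiv_AA_apply hq hp i x (EuclideanSpace.single i 1),
      EuclideanSpace.inner_single_right]
    simp only [RCLike.star_def, conj_trivial]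
    ring
  rw [key, Finset.sum_add_distrib, Finset.sum_sub_distrib, Finset.sum_sub_distrib,
    ← Finset.mul_sum, ← Finset.mul_sum, ← Finset.mul_sum, ← Finset.mul_sum,
    sum_coord_fderiv q x, sum_coord_fderiv p x]
  have hlq : ∑ i, fderiv ℝ (fun y => fderiv ℝ q y (EuclideanSpace.single i 1)) x
      (EuclideanSpace.single i 1) = lap q x := rfl
  have hlp : ∑ i, fderiv ℝ (fun y => fderiv ℝ p y (EuclideanSpace.single i 1)) x
      (EuclideanSpace.single i 1) = lap p x := rfl
  rw [hlq, hlp]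
  ring

lemma divAA_zero {n : ℕ} {lam : ℝ} {q p : EuclideanSpace ℝ (Fin (n + 1)) → ℝ}
    (hq : ContDiff ℝ 2 q) (hp : ContDiff ℝ 2 p)
    (hLp : ∀ x, 0 < x (Fin.last n) →
      lap p x - (1 / 2) * ⟪x, gradient p x⟫ + lam / 2 * p x = 0)
    (hLq : ∀ x, 0 < x (Fin.last n) →
      lap q x - (1 / 2) * ⟪x, gradient q x⟫ + lam / 2 * q x = 0)
    (x : EuclideanSpace ℝ (Fin (n + 1))) (hx : 0 < x (Fin.last n)) :
    ∑ i, fderiv ℝ (AA n q p i) x (EuclideanSpace.single i 1) = 0 := by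
  rw [sum_fderiv_AA hq hp x]
  have h1 : lap q x - (1 / 2) * ⟪x, gradient q x⟫ = -(lam / 2 * q x) := by
    have := hLq x hx; linarith
  have h2 : lap p x - (1 / 2) * ⟪x, gradient p x⟫ = -(lam / 2 * p x) := by
    have := hLp x hx; linarith
  rw [h1, h2]; ring

lemma abs_fderiv_le_grad {m : ℕ} (f : EuclideanSpace ℝ (Fin m) → ℝ)
    (x : EuclideanSpace ℝ (Fin m)) (i : Fin m) :
    |fderiv ℝ f x (EuclideanSpace.single i 1)| ≤ ‖gradient f x‖ := by
  rw [← inner_gradient]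
  refine (abs_real_inner_le_norm _ _).trans ?_
  simp [EuclideanSpace.norm_single]

lemma AA_bound {n : ℕ} {q p : EuclideanSpace ℝ (Fin (n + 1)) → ℝ} (c : ℝ) (k : ℕ)
    (hc : ∀ x, |q x| + ‖gradient q x‖ + |lap q x| + |p x| + ‖gradient p x‖ + |lap p x|
      ≤ c * (1 + ‖x‖) ^ k) :
    ∃ C : ℝ, 0 ≤ C ∧ ∀ (i : Fin (n + 1)) x,
      |AA n q p i x| ≤ C * Real.exp (-‖x‖ ^ 2 / 8) := by
  set c₀ : ℝ := (4 * π) ^ (-((n : ℝ) + 1) / 2) with hc₀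
  have hc₀pos : 0 < c₀ := Real.rpow_pos_of_pos (by positivity) _
  refine ⟨2 * c₀ * c ^ 2 * Real.exp (2 * (2 * (k : ℝ)) ^ 2), by positivity, fun i x => ?_⟩
  set t := ‖x‖ with htdef
  have ht : 0 ≤ t := norm_nonneg x
  have hsum := hc x
  have hnn1 : 0 ≤ |q x| := abs_nonneg _
  have hnn2 : 0 ≤ ‖gradient q x‖ := norm_nonneg _
  have hnn3 : 0 ≤ |lap q x| := abs_nonneg _
  have hnn4 : 0 ≤ |p x| := abs_nonneg _
  have hnn5 : 0 ≤ ‖gradient p x‖ := norm_nonneg _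
  have hnn6 : 0 ≤ |lap p x| := abs_nonneg _
  have h1 : |p x| ≤ c * (1 + t) ^ k := by linarith
  have h3 : |q x| ≤ c * (1 + t) ^ k := by linarith
  have h2 : |fderiv ℝ q x (EuclideanSpace.single i 1)| ≤ c * (1 + t) ^ k :=
    (abs_fderiv_le_grad q x i).trans (by linarith)
  have h4 : |fderiv ℝ p x (EuclideanSpace.single i 1)| ≤ c * (1 + t) ^ k :=
    (abs_fderiv_le_grad p x i).trans (by linarith)
  have hc0 : 0 ≤ c * (1 + t) ^ k := le_trans (abs_nonneg _) h1
  have habs : |AA n q p i x| ≤ GG n x * (2 * (c * (1 + t) ^ k) ^ 2) := by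
    have hGpos := gg_pos n x
    have hstep : |p x * fderiv ℝ q x (EuclideanSpace.single i 1)
        - q x * fderiv ℝ p x (EuclideanSpace.single i 1)| ≤ 2 * (c * (1 + t) ^ k) ^ 2 := by
      refine (abs_sub _ _).trans ?_
      rw [abs_mul, abs_mul]
      nlinarith [mul_le_mul h1 h2 (abs_nonneg _) hc0, mul_le_mul h3 h4 (abs_nonneg _) hc0]
    calc |AA n q p i x| = GG n x * |p x * fderiv ℝ q x (EuclideanSpace.single i 1)
          - q x * fderiv ℝ p x (EuclideanSpace.single i 1)| := by
            rw [AA, abs_mul, abs_of_pos hGpos]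
      _ ≤ GG n x * (2 * (c * (1 + t) ^ k) ^ 2) := by
            exact mul_le_mul_of_nonneg_left hstep hGpos.le
  refine habs.trans ?_
  have hGG : GG n x = c₀ * Real.exp (-t ^ 2 / 4) := rfl
  have hpow : ((1 + t) ^ k) ^ 2 ≤ Real.exp (2 * (k : ℝ) * t) := by
    have h5 : (1 + t) ≤ Real.exp t := by
      have := Real.add_one_le_exp t; linarith
    calc ((1 + t) ^ k) ^ 2 = (1 + t) ^ (2 * k) := by rw [← pow_mul, mul_comm]
      _ ≤ (Real.exp t) ^ (2 * k) := pow_le_pow_left₀ (by linarith) h5 _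
      _ = Real.exp (2 * (k : ℝ) * t) := by
          rw [← Real.exp_nat_mul]; push_cast; ring_nf
  have hquad : Real.exp (2 * (k : ℝ) * t) * Real.exp (-t ^ 2 / 4)
      ≤ Real.exp (2 * (2 * (k : ℝ)) ^ 2) * Real.exp (-t ^ 2 / 8) := by
    rw [← Real.exp_add, ← Real.exp_add]
    refine Real.exp_le_exp.2 ?_
    nlinarith [sq_nonneg (t - 4 * (2 * (k : ℝ)))]
  have hc2 : (c * (1 + t) ^ k) ^ 2 = c ^ 2 * ((1 + t) ^ k) ^ 2 := by ring
  rw [hGG, hc2]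
  calc c₀ * Real.exp (-t ^ 2 / 4) * (2 * (c ^ 2 * ((1 + t) ^ k) ^ 2))
      = 2 * c₀ * c ^ 2 * (((1 + t) ^ k) ^ 2 * Real.exp (-t ^ 2 / 4)) := by ring
    _ ≤ 2 * c₀ * c ^ 2 * (Real.exp (2 * (k : ℝ) * t) * Real.exp (-t ^ 2 / 4)) := by
        refine mul_le_mul_of_nonneg_left ?_ (by positivity)
        exact mul_le_mul_of_nonneg_right hpow (Real.exp_pos _).le
    _ ≤ 2 * c₀ * c ^ 2 * (Real.exp (2 * (2 * (k : ℝ)) ^ 2) * Real.exp (-t ^ 2 / 8)) := by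
        refine mul_le_mul_of_nonneg_left hquad (by positivity)
    _ = 2 * c₀ * c ^ 2 * Real.exp (2 * (2 * (k : ℝ)) ^ 2) * Real.exp (-t ^ 2 / 8) := by ring

noncomputable def toE {m : ℕ} (y : Fin m → ℝ) : EuclideanSpace ℝ (Fin m) :=
  (WithLp.equiv 2 (Fin m → ℝ)).symm y

lemma norm_toE_sq {m : ℕ} (y : Fin m → ℝ) : ‖toE y‖ ^ 2 = ∑ i, (y i) ^ 2 := by
  rw [EuclideanSpace.norm_eq]
  rw [Real.sq_sqrt (by positivity)]
  simp [toE]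

lemma contDiff_GG (n : ℕ) : ContDiff ℝ 1 (GG n) := by
  have h : GG n = fun x : EuclideanSpace ℝ (Fin (n + 1)) =>
      (4 * π) ^ (-((n : ℝ) + 1) / 2) * Real.exp (-‖x‖ ^ 2 / 4) := rfl
  rw [h]
  exact contDiff_const.mul (((contDiff_norm_sq ℝ).neg.div_const 4).exp)

lemma contDiff_AA {n : ℕ} {q p : EuclideanSpace ℝ (Fin (n + 1)) → ℝ}
    (hq : ContDiff ℝ 2 q) (hp : ContDiff ℝ 2 p) (i : Fin (n + 1)) :
    ContDiff ℝ 1 (AA n q p i) := by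
  have h : AA n q p i = fun x => GG n x * (p x * fderiv ℝ q x (EuclideanSpace.single i 1)
      - q x * fderiv ℝ p x (EuclideanSpace.single i 1)) := rfl
  rw [h]
  exact (contDiff_GG n).mul
    (((hp.of_le one_le_two).mul (diff_D hq _)).sub ((hq.of_le one_le_two).mul (diff_D hp _)))

noncomputable def FF (n : ℕ) (q p : EuclideanSpace ℝ (Fin (n + 1)) → ℝ)
    (y : Fin (n + 1) → ℝ) (i : Fin (n + 1)) : ℝ := AA n q p i (toE y)

noncomputable def FF' (n : ℕ) (q p : EuclideanSpace ℝ (Fin (n + 1)) → ℝ)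
    (y : Fin (n + 1) → ℝ) : (Fin (n + 1) → ℝ) →L[ℝ] (Fin (n + 1) → ℝ) :=
  ContinuousLinearMap.pi fun i => (fderiv ℝ (AA n q p i) (toE y)).comp
    ((EuclideanSpace.equiv (Fin (n + 1)) ℝ).symm :
      (Fin (n + 1) → ℝ) →L[ℝ] EuclideanSpace ℝ (Fin (n + 1)))

lemma hasFDerivAt_toE {m : ℕ} (y : Fin m → ℝ) :
    HasFDerivAt (toE (m := m))
      (((EuclideanSpace.equiv (Fin m) ℝ).symm :
        (Fin m → ℝ) →L[ℝ] EuclideanSpace ℝ (Fin m))) y :=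
  ((EuclideanSpace.equiv (Fin m) ℝ).symm).hasFDerivAt

lemma hasFDerivAt_FF {n : ℕ} {q p : EuclideanSpace ℝ (Fin (n + 1)) → ℝ}
    (hq : ContDiff ℝ 2 q) (hp : ContDiff ℝ 2 p) (y : Fin (n + 1) → ℝ) :
    HasFDerivAt (FF n q p) (FF' n q p y) y := by
  have hd : ∀ i, DifferentiableAt ℝ (AA n q p i) (toE y) := fun i =>
    ((contDiff_AA hq hp i).differentiable one_ne_zero) (toE y)
  exact hasFDerivAt_pi.2 fun i => (hd i).hasFDerivAt.comp y (hasFDerivAt_toE y)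

lemma div_FF_eq {n : ℕ} (q p : EuclideanSpace ℝ (Fin (n + 1)) → ℝ) (y : Fin (n + 1) → ℝ) :
    ∑ i, FF' n q p y (Pi.single i 1) i =
      ∑ i, fderiv ℝ (AA n q p i) (toE y) (EuclideanSpace.single i 1) := by
  refine Finset.sum_congr rfl fun i _ => ?_
  rfl

lemma cont_div_FF {n : ℕ} {q p : EuclideanSpace ℝ (Fin (n + 1)) → ℝ}
    (hq : ContDiff ℝ 2 q) (hp : ContDiff ℝ 2 p) :
    Continuous (fun y => ∑ i, FF' n q p y (Pi.single i 1) i) := by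
  have h : (fun y => ∑ i, FF' n q p y (Pi.single i 1) i) =
      fun y => ∑ i, fderiv ℝ (AA n q p i) (toE y) (EuclideanSpace.single i 1) := by
    funext y; exact div_FF_eq q p y
  rw [h]
  refine continuous_finset_sum _ fun i _ => ?_
  have hc1 : Continuous (fun x => fderiv ℝ (AA n q p i) x) :=
    (contDiff_AA hq hp i).continuous_fderiv one_ne_zero
  have hc2 : Continuous (toE (m := n + 1)) :=
    ((EuclideanSpace.equiv (Fin (n + 1)) ℝ).symm).continuous
  exact ((ContinuousLinearMap.apply ℝ ℝ (EuclideanSpace.single i 1)).continuous).comp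
    (hc1.comp hc2)

lemma cont_FF {n : ℕ} {q p : EuclideanSpace ℝ (Fin (n + 1)) → ℝ}
    (hq : ContDiff ℝ 2 q) (hp : ContDiff ℝ 2 p) (i : Fin (n + 1)) :
    Continuous (fun y => FF n q p y i) := by
  have hc2 : Continuous (toE (m := n + 1)) :=
    ((EuclideanSpace.equiv (Fin (n + 1)) ℝ).symm).continuous
  exact ((contDiff_AA hq hp i).continuous).comp hc2

lemma integrable_gauss_pi (m : ℕ) :
    Integrable (fun y : Fin m → ℝ => Real.exp (-(∑ i, y i ^ 2) / 8)) := by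
  have h := (GaussianFourier.integrable_cexp_neg_mul_sum_add (b := (1/8 : ℂ))
    (by norm_num) (fun _ : Fin m => (0 : ℂ))).norm
  have heq : ∀ y : Fin m → ℝ,
      ‖Complex.exp (-(1/8 : ℂ) * ∑ i, (y i : ℂ) ^ 2 + ∑ i, (0 : ℂ) * y i)‖
        = Real.exp (-(∑ i, y i ^ 2) / 8) := by
    intro y
    rw [Complex.norm_exp]
    congr 1
    have : (-(1/8 : ℂ) * ∑ i, (y i : ℂ) ^ 2 + ∑ i, (0 : ℂ) * y i)
        = ((-(∑ i, y i ^ 2) / 8 : ℝ) : ℂ) := by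
      simp only [zero_mul, Finset.sum_const_zero, add_zero]
      push_cast
      ring
    rw [this, Complex.ofReal_re]
  exact h.congr (Filter.Eventually.of_forall fun y => (heq y))

lemma sum_sq_insertNth {m : ℕ} (i : Fin (m + 1)) (t : ℝ) (y : Fin m → ℝ) :
    ∑ j, (Fin.insertNth i t y j) ^ 2 = t ^ 2 + ∑ j, (y j) ^ 2 := by
  rw [Fin.sum_univ_succAbove _ i]
  simp

lemma cont_insertNth {m : ℕ} (i : Fin (m + 1)) (t : ℝ) :
    Continuous (fun y : Fin m → ℝ => (Fin.insertNth i t y : Fin (m + 1) → ℝ)) := by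
  refine continuous_pi fun j => ?_
  rcases eq_or_ne i j with h | h
  · subst h; simpa [Fin.insertNth_apply_same] using (continuous_const : Continuous fun _ : Fin m → ℝ => t)
  · obtain ⟨k, rfl⟩ := Fin.exists_succAbove_eq (Ne.symm h)
    simpa [Fin.insertNth_apply_succAbove] using continuous_apply k

lemma cont_snoc_t {m : ℕ} (y : Fin m → ℝ) :
    Continuous (fun t : ℝ => (Fin.snoc y t : Fin (m + 1) → ℝ)) := by
  refine continuous_pi fun j => ?_
  rcases Fin.eq_castSucc_or_eq_last j with ⟨k, rfl⟩ | rfl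
  · simpa [Fin.snoc_castSucc] using (continuous_const : Continuous fun _ : ℝ => y k)
  · simpa [Fin.snoc_last] using continuous_id'

lemma FF_bound {n : ℕ} {q p : EuclideanSpace ℝ (Fin (n + 1)) → ℝ} {C : ℝ}
    (hCb : ∀ (i : Fin (n + 1)) x, |AA n q p i x| ≤ C * Real.exp (-‖x‖ ^ 2 / 8))
    (y : Fin (n + 1) → ℝ) (i : Fin (n + 1)) :
    |FF n q p y i| ≤ C * Real.exp (-(∑ j, y j ^ 2) / 8) := by
  have h := hCb i (toE y)
  rwa [norm_toE_sq] at h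

lemma tends_beta (C : ℝ) (m : ℕ) :
    Filter.Tendsto (fun R : ℕ => C * Real.exp (-(R : ℝ) ^ 2 / 8) * (2 * (R : ℝ)) ^ m)
      Filter.atTop (nhds 0) := by
  have hreal : Filter.Tendsto (fun x : ℝ => C * Real.exp (-x ^ 2 / 8) * (2 * x) ^ m)
      Filter.atTop (nhds 0) := by
    have h1 : Filter.Tendsto (fun x : ℝ => |C| * 2 ^ m * (x ^ m * Real.exp (-x)))
        Filter.atTop (nhds 0) := by
      simpa using (Real.tendsto_pow_mul_exp_neg_atTop_nhds_zero m).const_mul (|C| * 2 ^ m)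
    refine squeeze_zero_norm' ?_ h1
    filter_upwards [Filter.eventually_ge_atTop (8 : ℝ)] with x hx
    have hx0 : (0 : ℝ) ≤ x := by linarith
    have hexp : Real.exp (-x ^ 2 / 8) ≤ Real.exp (-x) := by
      refine Real.exp_le_exp.2 ?_; nlinarith
    have : ‖C * Real.exp (-x ^ 2 / 8) * (2 * x) ^ m‖
        = |C| * Real.exp (-x ^ 2 / 8) * (2 * x) ^ m := by
      rw [norm_eq_abs, abs_mul, abs_mul, abs_pow, abs_of_nonneg (by positivity : (0:ℝ) ≤ 2 * x),
        abs_of_pos (Real.exp_pos _)]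
    rw [this]
    calc |C| * Real.exp (-x ^ 2 / 8) * (2 * x) ^ m
        ≤ |C| * Real.exp (-x) * (2 * x) ^ m := by
          refine mul_le_mul_of_nonneg_right (mul_le_mul_of_nonneg_left hexp (abs_nonneg C))
            (by positivity)
      _ = |C| * 2 ^ m * (x ^ m * Real.exp (-x)) := by rw [mul_pow]; ring
  exact hreal.comp tendsto_natCast_atTop_atTop

lemma J_pos_zero {n : ℕ} {lam : ℝ} {q p : EuclideanSpace ℝ (Fin (n + 1)) → ℝ}
    (hq : ContDiff ℝ 2 q) (hp : ContDiff ℝ 2 p)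
    (hLp : ∀ x, 0 < x (Fin.last n) →
      lap p x - (1 / 2) * ⟪x, gradient p x⟫ + lam / 2 * p x = 0)
    (hLq : ∀ x, 0 < x (Fin.last n) →
      lap q x - (1 / 2) * ⟪x, gradient q x⟫ + lam / 2 * q x = 0)
    {C : ℝ} (hC0 : 0 ≤ C)
    (hCb : ∀ (i : Fin (n + 1)) x, |AA n q p i x| ≤ C * Real.exp (-‖x‖ ^ 2 / 8))
    {ε : ℝ} (hε : 0 < ε) :
    ∫ y : Fin n → ℝ, FF n q p ((Fin.last n).insertNth ε y) (Fin.last n) = 0 := by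
  classical
  set g : (Fin n → ℝ) → ℝ := fun y => C * Real.exp (-(∑ j, y j ^ 2) / 8) with hg
  have hgint : Integrable g := (integrable_gauss_pi n).const_mul C
  have hsec : ∀ t : ℝ, Integrable
      (fun y : Fin n → ℝ => FF n q p ((Fin.last n).insertNth t y) (Fin.last n)) := by
    intro t
    refine hgint.mono' ?_ ?_
    · exact ((cont_FF hq hp (Fin.last n)).comp (cont_insertNth _ t)).aestronglyMeasurable
    · refine Filter.Eventually.of_forall fun y => ?_
      have hb := FF_bound hCb ((Fin.last n).insertNth t y) (Fin.last n)
      rw [sum_sq_insertNth] at hb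
      have hexp : Real.exp (-(t ^ 2 + ∑ j, y j ^ 2) / 8) ≤ Real.exp (-(∑ j, y j ^ 2) / 8) :=
        Real.exp_le_exp.2 (by nlinarith [sq_nonneg t])
      exact le_trans hb (mul_le_mul_of_nonneg_left hexp hC0)
  set aF : ℕ → Fin (n + 1) → ℝ := fun R j => if j = Fin.last n then ε else -(R : ℝ) with haF
  set bF : ℕ → Fin (n + 1) → ℝ := fun R _ => (R : ℝ) with hbF
  -- the box identity from the divergence theorem
  have box : ∀ R : ℕ, ε ≤ (R : ℝ) →
      0 = ∑ i : Fin (n + 1),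
        ((∫ y in Icc (aF R ∘ i.succAbove) (bF R ∘ i.succAbove),
            FF n q p (i.insertNth (bF R i) y) i)
          - ∫ y in Icc (aF R ∘ i.succAbove) (bF R ∘ i.succAbove),
            FF n q p (i.insertNth (aF R i) y) i) := by
    intro R hR
    have hR0 : (0 : ℝ) ≤ (R : ℝ) := le_trans hε.le hR
    have hle : aF R ≤ bF R := by
      intro j
      by_cases hj : j = Fin.last n
      · simp only [haF, hbF, hj, if_pos]; exact hR
      · simp only [haF, hbF, hj, if_neg, not_false_iff]; linarith
    have hdiv := integral_divergence_of_hasFDerivAt_off_countable (aF R) (bF R) hle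
      (FF n q p) (FF' n q p) ∅ Set.countable_empty
      ((continuous_pi fun i => cont_FF hq hp i).continuousOn)
      (fun x _ => hasFDerivAt_FF hq hp x)
      (((cont_div_FF hq hp).continuousOn).integrableOn_compact isCompact_Icc)
    have hzero : (∫ x in Icc (aF R) (bF R), ∑ i, FF' n q p x (Pi.single i 1) i) = 0 := by
      have hae : (Set.pi univ fun i => Ioo (aF R i) (bF R i))
          =ᵐ[(volume : Measure (Fin (n + 1) → ℝ))] Icc (aF R) (bF R) := by
        rw [volume_pi]; exact Measure.univ_pi_Ioo_ae_eq_Icc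
      rw [← setIntegral_congr_set hae]
      have heq0 : EqOn (fun x => ∑ i, FF' n q p x (Pi.single i 1) i) (fun _ => (0 : ℝ))
          (Set.pi univ fun i => Ioo (aF R i) (bF R i)) := by
        intro x hx
        have hxl := hx (Fin.last n) (Set.mem_univ _)
        have hx' : 0 < x (Fin.last n) := by
          simp only [Set.mem_Ioo] at hxl
          have h1 := hxl.1
          have : aF R (Fin.last n) = ε := by simp [haF]
          rw [this] at h1
          exact lt_trans hε h1
        have := divAA_zero hq hp hLp hLq (toE x) hx'
        simpa [div_FF_eq] using this
      rw [setIntegral_congr_fun (MeasurableSet.univ_pi fun _ => measurableSet_Ioo) heq0]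
      simp
    rw [hzero] at hdiv
    exact hdiv
  -- uniform estimate for faces at distance R
  have hface_est : ∀ (R : ℕ) (i : Fin (n + 1)) (t : ℝ), |t| = (R : ℝ) → ε ≤ (R : ℝ) →
      ‖∫ y in Icc (aF R ∘ i.succAbove) (bF R ∘ i.succAbove), FF n q p (i.insertNth t y) i‖
        ≤ C * Real.exp (-(R : ℝ) ^ 2 / 8) * (2 * (R : ℝ)) ^ n := by
    intro R i t ht hεR
    have hR0 : (0 : ℝ) ≤ (R : ℝ) := le_trans hε.le hεR
    have hsub : Icc (aF R ∘ i.succAbove) (bF R ∘ i.succAbove)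
        ⊆ Icc (fun _ : Fin n => -(R : ℝ)) (fun _ => (R : ℝ)) := by
      refine Icc_subset_Icc ?_ ?_ <;> intro j
      · by_cases h : i.succAbove j = Fin.last n <;> simp only [haF, Function.comp_apply, h,
          if_pos, if_neg, not_false_iff] <;> [linarith; exact le_refl _]
      · simp [hbF]
    have hμfin : volume (Icc (aF R ∘ i.succAbove) (bF R ∘ i.succAbove)) < ⊤ :=
      (isCompact_Icc).measure_lt_top
    have hpt : ∀ y ∈ Icc (aF R ∘ i.succAbove) (bF R ∘ i.succAbove),
        ‖FF n q p (i.insertNth t y) i‖ ≤ C * Real.exp (-(R : ℝ) ^ 2 / 8) := by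
      intro y _
      have hb := FF_bound hCb (i.insertNth t y) i
      rw [sum_sq_insertNth] at hb
      have ht2 : t ^ 2 = (R : ℝ) ^ 2 := by rw [← sq_abs, ht]
      have hexp : Real.exp (-(t ^ 2 + ∑ j, y j ^ 2) / 8) ≤ Real.exp (-(R : ℝ) ^ 2 / 8) := by
        refine Real.exp_le_exp.2 ?_
        have := Finset.sum_nonneg (fun j (_ : j ∈ Finset.univ) => sq_nonneg (y j))
        nlinarith
      exact le_trans hb (mul_le_mul_of_nonneg_left hexp hC0)
    refine (norm_setIntegral_le_of_norm_le_const hμfin hpt).trans ?_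
    have hμle : (volume (Icc (aF R ∘ i.succAbove) (bF R ∘ i.succAbove))).toReal
        ≤ (2 * (R : ℝ)) ^ n := by
      have h2 : (volume (Icc (fun _ : Fin n => -(R : ℝ)) (fun _ => (R : ℝ)))).toReal
          = (2 * (R : ℝ)) ^ n := by
        rw [Real.volume_Icc_pi_toReal (fun _ => by linarith)]
        rw [Finset.prod_const]
        congr 1
        · ring
        · simp
      refine le_trans (ENNReal.toReal_mono ?_ (measure_mono hsub)) h2.le
      exact (isCompact_Icc).measure_lt_top.ne
    exact mul_le_mul_of_nonneg_left hμle (mul_nonneg hC0 (Real.exp_pos _).le)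
  -- limit of the distinguished back face
  set L : ℝ := ∫ y : Fin n → ℝ, FF n q p ((Fin.last n).insertNth ε y) (Fin.last n) with hL
  have hfacelast : ∀ R : ℕ, (aF R ∘ (Fin.last n).succAbove) = (fun _ : Fin n => -(R : ℝ)) := by
    intro R; funext j
    have hcs : (Fin.last n).succAbove j = j.castSucc := by rw [Fin.succAbove_last]
    simp [haF, hcs, (Fin.castSucc_lt_last j).ne]
  have hblast : Filter.Tendsto (fun R : ℕ =>
      ∫ y in Icc (aF R ∘ (Fin.last n).succAbove) (bF R ∘ (Fin.last n).succAbove),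
        FF n q p ((Fin.last n).insertNth (aF R (Fin.last n)) y) (Fin.last n))
      Filter.atTop (nhds L) := by
    have hmono : Monotone (fun R : ℕ => Icc (fun _ : Fin n => -(R : ℝ)) (fun _ => (R : ℝ))) := by
      intro R S hRS
      have hRS' : (R : ℝ) ≤ (S : ℝ) := by exact_mod_cast hRS
      exact Icc_subset_Icc (fun j => by simpa using neg_le_neg hRS') (fun j => by simpa using hRS')
    have huniv : (⋃ R : ℕ, Icc (fun _ : Fin n => -(R : ℝ)) (fun _ => (R : ℝ))) = univ := by
      ext y
      simp only [Set.mem_iUnion, Set.mem_univ, iff_true]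
      obtain ⟨R, hR⟩ := exists_nat_ge ‖y‖
      refine ⟨R, Set.mem_Icc.2 ⟨fun j => ?_, fun j => ?_⟩⟩
      · have hj : |y j| ≤ (R : ℝ) := le_trans (by simpa using norm_le_pi_norm y j) hR
        exact (abs_le.1 hj).1
      · have hj : |y j| ≤ (R : ℝ) := le_trans (by simpa using norm_le_pi_norm y j) hR
        exact (abs_le.1 hj).2
    have ht := tendsto_setIntegral_of_monotone
      (s := fun R : ℕ => Icc (fun _ : Fin n => -(R : ℝ)) (fun _ => (R : ℝ)))
      (f := fun y => FF n q p ((Fin.last n).insertNth ε y) (Fin.last n))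
      (fun R => measurableSet_Icc) hmono ((hsec ε).integrableOn)
    rw [huniv, setIntegral_univ] at ht
    refine ht.congr fun R => ?_
    have h2 : (bF R ∘ (Fin.last n).succAbove) = (fun _ : Fin n => (R : ℝ)) := rfl
    have h1 : aF R (Fin.last n) = ε := by simp [haF]
    rw [hfacelast R, h2, h1]
  -- the other faces tend to zero
  obtain ⟨N, hN⟩ := exists_nat_ge ε
  have hβ := tends_beta C n
  have hfront : ∀ i : Fin (n + 1), Filter.Tendsto (fun R : ℕ =>
      ∫ y in Icc (aF R ∘ i.succAbove) (bF R ∘ i.succAbove),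
        FF n q p (i.insertNth (bF R i) y) i) Filter.atTop (nhds 0) := by
    intro i
    refine squeeze_zero_norm' ?_ hβ
    filter_upwards [Filter.eventually_ge_atTop N] with R hR'
    have hεR : ε ≤ (R : ℝ) := hN.trans (by exact_mod_cast hR')
    have habs : |bF R i| = (R : ℝ) := abs_of_nonneg (le_trans hε.le hεR)
    exact hface_est R i (bF R i) habs hεR
  have hback0 : ∀ i : Fin (n + 1), i ≠ Fin.last n → Filter.Tendsto (fun R : ℕ =>
      ∫ y in Icc (aF R ∘ i.succAbove) (bF R ∘ i.succAbove),
        FF n q p (i.insertNth (aF R i) y) i) Filter.atTop (nhds 0) := by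
    intro i hi
    refine squeeze_zero_norm' ?_ hβ
    filter_upwards [Filter.eventually_ge_atTop N] with R hR'
    have hεR : ε ≤ (R : ℝ) := hN.trans (by exact_mod_cast hR')
    have ha : aF R i = -(R : ℝ) := by simp [haF, hi]
    have habs : |aF R i| = (R : ℝ) := by
      rw [ha, abs_neg, abs_of_nonneg (le_trans hε.le hεR)]
    exact hface_est R i (aF R i) habs hεR
  -- combine
  have hterm : ∀ i : Fin (n + 1), Filter.Tendsto (fun R : ℕ =>
      ((∫ y in Icc (aF R ∘ i.succAbove) (bF R ∘ i.succAbove),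
          FF n q p (i.insertNth (bF R i) y) i)
        - ∫ y in Icc (aF R ∘ i.succAbove) (bF R ∘ i.succAbove),
          FF n q p (i.insertNth (aF R i) y) i))
      Filter.atTop (nhds (if i = Fin.last n then -L else 0)) := by
    intro i
    by_cases hi : i = Fin.last n
    · subst hi
      simpa using (hfront (Fin.last n)).sub hblast
    · simpa [hi] using (hfront i).sub (hback0 i hi)
  have hSum := tendsto_finset_sum Finset.univ (fun i (_ : i ∈ Finset.univ) => hterm i)
  have hval : (∑ i : Fin (n + 1), if i = Fin.last n then -L else 0) = -L := by
    simp
  rw [hval] at hSum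
  have heq0 : ∀ᶠ R : ℕ in Filter.atTop, (∑ i : Fin (n + 1),
      ((∫ y in Icc (aF R ∘ i.succAbove) (bF R ∘ i.succAbove),
          FF n q p (i.insertNth (bF R i) y) i)
        - ∫ y in Icc (aF R ∘ i.succAbove) (bF R ∘ i.succAbove),
          FF n q p (i.insertNth (aF R i) y) i)) = 0 := by
    filter_upwards [Filter.eventually_ge_atTop N] with R hR'
    exact (box R (hN.trans (by exact_mod_cast hR'))).symm
  have hzero : Filter.Tendsto (fun _ : ℕ => (0 : ℝ)) Filter.atTop (nhds (-L)) :=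
    ((Filter.tendsto_congr' heq0).1 hSum)
  have : -L = 0 := (tendsto_nhds_unique hzero tendsto_const_nhds).symm ▸ rfl
  have hL0 : -L = 0 := tendsto_nhds_unique hzero tendsto_const_nhds
  linarith

lemma J_zero {n : ℕ} {lam : ℝ} {q p : EuclideanSpace ℝ (Fin (n + 1)) → ℝ}
    (hq : ContDiff ℝ 2 q) (hp : ContDiff ℝ 2 p)
    (hLp : ∀ x, 0 < x (Fin.last n) →
      lap p x - (1 / 2) * ⟪x, gradient p x⟫ + lam / 2 * p x = 0)
    (hLq : ∀ x, 0 < x (Fin.last n) →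
      lap q x - (1 / 2) * ⟪x, gradient q x⟫ + lam / 2 * q x = 0)
    {C : ℝ} (hC0 : 0 ≤ C)
    (hCb : ∀ (i : Fin (n + 1)) x, |AA n q p i x| ≤ C * Real.exp (-‖x‖ ^ 2 / 8)) :
    ∫ y : Fin n → ℝ, FF n q p ((Fin.last n).insertNth 0 y) (Fin.last n) = 0 := by
  set g : (Fin n → ℝ) → ℝ := fun y => C * Real.exp (-(∑ j, y j ^ 2) / 8) with hg
  have hgint : Integrable g := (integrable_gauss_pi n).const_mul C
  have hmeas : ∀ t : ℝ, AEStronglyMeasurable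
      (fun y : Fin n → ℝ => FF n q p ((Fin.last n).insertNth t y) (Fin.last n)) volume :=
    fun t => ((cont_FF hq hp (Fin.last n)).comp (cont_insertNth _ t)).aestronglyMeasurable
  have hbound : ∀ t : ℝ, ∀ y : Fin n → ℝ,
      ‖FF n q p ((Fin.last n).insertNth t y) (Fin.last n)‖ ≤ g y := by
    intro t y
    have hb := FF_bound hCb ((Fin.last n).insertNth t y) (Fin.last n)
    rw [sum_sq_insertNth] at hb
    have hexp : Real.exp (-(t ^ 2 + ∑ j, y j ^ 2) / 8) ≤ Real.exp (-(∑ j, y j ^ 2) / 8) :=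
      Real.exp_le_exp.2 (by nlinarith [sq_nonneg t])
    exact le_trans hb (mul_le_mul_of_nonneg_left hexp hC0)
  have hlim : ∀ᵐ y : Fin n → ℝ, Filter.Tendsto
      (fun t : ℝ => FF n q p ((Fin.last n).insertNth t y) (Fin.last n))
      (nhdsWithin 0 (Ioi 0)) (nhds (FF n q p ((Fin.last n).insertNth 0 y) (Fin.last n))) := by
    refine Filter.Eventually.of_forall fun y => ?_
    have hco : Continuous (fun t : ℝ => FF n q p ((Fin.last n).insertNth t y) (Fin.last n)) := by
      have hsnoc : (fun t : ℝ => ((Fin.last n).insertNth t y : Fin (n + 1) → ℝ))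
          = fun t => (Fin.snoc y t : Fin (n + 1) → ℝ) := by
        funext t; exact Fin.insertNth_last' t y
      exact (cont_FF hq hp (Fin.last n)).comp (by rw [hsnoc]; exact cont_snoc_t y)
    exact (hco.tendsto 0).mono_left nhdsWithin_le_nhds
  have htends := tendsto_integral_filter_of_dominated_convergence
    (μ := volume) (l := nhdsWithin (0:ℝ) (Ioi 0)) g
    (Filter.Eventually.of_forall hmeas)
    (Filter.Eventually.of_forall fun t => Filter.Eventually.of_forall (hbound t))
    hgint hlim
  have hJt0 : ∀ᶠ t : ℝ in nhdsWithin 0 (Ioi 0),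
      (∫ y : Fin n → ℝ, FF n q p ((Fin.last n).insertNth t y) (Fin.last n)) = 0 := by
    filter_upwards [self_mem_nhdsWithin] with t ht
    exact J_pos_zero hq hp hLp hLq hC0 hCb ht
  have hconst : Filter.Tendsto (fun _ : ℝ => (0 : ℝ)) (nhdsWithin (0:ℝ) (Ioi 0))
      (nhds (∫ y : Fin n → ℝ, FF n q p ((Fin.last n).insertNth 0 y) (Fin.last n))) :=
    (Filter.tendsto_congr' hJt0).1 htends
  exact (tendsto_nhds_unique hconst tendsto_const_nhds)

/-- Gaussian-weighted Green's identity on the half-space `{xₙ > 0}`: if `p = p(xₙ)` and `q`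
both satisfy `L_λ u = Δu − (x/2)·∇u + (λ/2)u = 0` on `{xₙ > 0}`, then the boundary term
`∫_{xₙ=0} (q ∂ₙp − p ∂ₙq) Gₙ₊₁ dx'` vanishes. -/
theorem stmt6 (n : ℕ) (lam : ℝ) (q p : EuclideanSpace ℝ (Fin (n + 1)) → ℝ) (P : ℝ → ℝ)
    (hq : ContDiff ℝ 2 q) (hp : ContDiff ℝ 2 p)
    (hpP : ∀ x, p x = P (x (Fin.last n)))
    (hgrowth : ∃ (c : ℝ) (k : ℕ), ∀ x,
      |q x| + ‖gradient q x‖ + |lap q x| + |p x| + ‖gradient p x‖ + |lap p x|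
        ≤ c * (1 + ‖x‖) ^ k)
    (hLp : ∀ x, 0 < x (Fin.last n) →
      lap p x - (1 / 2) * ⟪x, gradient p x⟫ + lam / 2 * p x = 0)
    (hLq : ∀ x, 0 < x (Fin.last n) →
      lap q x - (1 / 2) * ⟪x, gradient q x⟫ + lam / 2 * q x = 0) :
    ∫ x' : EuclideanSpace ℝ (Fin n),
        (q (emb n x') * dn p (emb n x') - p (emb n x') * dn q (emb n x'))
          * ((4 * π) ^ (-((n : ℝ) + 1) / 2) * Real.exp (-‖emb n x'‖ ^ 2 / 4)) = 0 := by
  obtain ⟨c, k, hc⟩ := hgrowth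
  obtain ⟨C, hC0, hCb⟩ := AA_bound c k hc
  have hJ0 := J_zero hq hp hLp hLq hC0 hCb
  have hfun : (fun x' : EuclideanSpace ℝ (Fin n) =>
      (q (emb n x') * dn p (emb n x') - p (emb n x') * dn q (emb n x'))
        * ((4 * π) ^ (-((n : ℝ) + 1) / 2) * Real.exp (-‖emb n x'‖ ^ 2 / 4)))
      = fun x' => - AA n q p (Fin.last n) (emb n x') := by
    funext x'
    simp only [AA, GG, dn]
    ring
  rw [hfun, integral_neg, neg_eq_zero]
  have hmp := EuclideanSpace.volume_preserving_symm_measurableEquiv_toLp (Fin n)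
  have hcomp := hmp.integral_comp (MeasurableEquiv.measurableEmbedding _)
      (fun y : Fin n → ℝ => FF n q p ((Fin.last n).insertNth 0 y) (Fin.last n))
  have hptwise : ∀ x' : EuclideanSpace ℝ (Fin n),
      FF n q p ((Fin.last n).insertNth (0:ℝ) ((MeasurableEquiv.toLp 2 (Fin n → ℝ)).symm x'))
          (Fin.last n)
        = AA n q p (Fin.last n) (emb n x') := by
    intro x'
    have h1 : ((Fin.last n).insertNth (0:ℝ) ((MeasurableEquiv.toLp 2 (Fin n → ℝ)).symm x'))
        = (Fin.snoc ((WithLp.equiv 2 (Fin n → ℝ)) x') (0:ℝ) : Fin (n + 1) → ℝ) := by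
      rw [Fin.insertNth_last']
      rfl
    simp only [FF]
    rw [h1]
    rfl
  have hgoal : (fun x' : EuclideanSpace ℝ (Fin n) => AA n q p (Fin.last n) (emb n x'))
      = fun x' => FF n q p ((Fin.last n).insertNth (0:ℝ)
          ((MeasurableEquiv.toLp 2 (Fin n → ℝ)).symm x')) (Fin.last n) := by
    funext x'; exact (hptwise x').symm
  rw [hgoal]
  rw [show (fun x' : EuclideanSpace ℝ (Fin n) => FF n q p ((Fin.last n).insertNth (0:ℝ)
      ((MeasurableEquiv.toLp 2 (Fin n → ℝ)).symm x')) (Fin.last n))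
    = (fun y : Fin n → ℝ => FF n q p ((Fin.last n).insertNth 0 y) (Fin.last n)) ∘
      ((MeasurableEquiv.toLp 2 (Fin n → ℝ)).symm) from rfl]
  rw [show ∫ x' : EuclideanSpace ℝ (Fin n), ((fun y : Fin n → ℝ =>
      FF n q p ((Fin.last n).insertNth 0 y) (Fin.last n)) ∘
      ((MeasurableEquiv.toLp 2 (Fin n → ℝ)).symm)) x' = _ from hcomp]
  exact hJ0
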